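/- Let A be a row circular binary m×n matrix with no dominating rows, with each row having between 2 and n−1 ones, and no column of all zeroes or all ones. For any row support C of A and any vertex v of Q*(A), 1 ≤ |C ∩ supp(v)| ≤ 2; moreover, if |C ∩ supp(v)| = 2, then C ∩ supp(v) consists of two cyclically consecutive elements of supp(v). -/

import Mathlib

open Finset

/-- Support of a vector. -/
def supp {n : ℕ} (x : Fin n → ℝ) : Set (Fin n) := {j | x j ≠ 0}

/-- Support of the `t`-th row of a matrix. -/
def rowSupp {m n : ℕ} (A : Matrix (Fin m) (Fin n) ℝ) (t : Fin m) : Set (Fin n) :=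
  {j | A t j ≠ 0}

def IsBinaryMatrix {m n : ℕ} (A : Matrix (Fin m) (Fin n) ℝ) : Prop :=
  ∀ t j, A t j = 0 ∨ A t j = 1

def IsBinaryVec {n : ℕ} (x : Fin n → ℝ) : Prop := ∀ j, x j = 0 ∨ x j = 1

/-- The polyhedron `{x | A x ≥ b, x ≥ 0}`. -/
def polyP {m n : ℕ} (A : Matrix (Fin m) (Fin n) ℝ) (b : Fin m → ℝ) : Set (Fin n → ℝ) :=
  {x | (∀ i, b i ≤ ∑ j, A i j * x j) ∧ ∀ j, 0 ≤ x j}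

/-- The linear relaxation `Q(A) = {x | A x ≥ 1, x ≥ 0}`. -/
def polyQ {m n : ℕ} (A : Matrix (Fin m) (Fin n) ℝ) : Set (Fin n → ℝ) :=
  {x | (∀ i, 1 ≤ ∑ j, A i j * x j) ∧ ∀ j, 0 ≤ x j}

/-- The set covering polyhedron `Q*(A)`: convex hull of nonnegative integer solutions of
`A x ≥ 1`. -/
def Qstar {m n : ℕ} (A : Matrix (Fin m) (Fin n) ℝ) : Set (Fin n → ℝ) :=
  convexHull ℝ {x | (∀ j, ∃ k : ℕ, x j = k) ∧ ∀ i, 1 ≤ ∑ j, A i j * x j}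

/-- A vertex of a convex set is an extreme point. -/
def IsVertex {n : ℕ} (S : Set (Fin n → ℝ)) (v : Fin n → ℝ) : Prop :=
  v ∈ S.extremePoints ℝ

/-- Two distinct vertices are adjacent when they lie on a common edge, i.e. the segment
joining them is a face (extreme subset) of `S`. -/
def AdjacentVerts {n : ℕ} (S : Set (Fin n → ℝ)) (v w : Fin n → ℝ) : Prop :=
  v ≠ w ∧ IsVertex S v ∧ IsVertex S w ∧ IsExtreme ℝ S (segment ℝ v w)

/-- There is a row support `C` with `C ∩ supp v = {p}` and `C ∩ supp v' = {p'}`. -/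
def jsgEdge {m n : ℕ} (A : Matrix (Fin m) (Fin n) ℝ) (v v' : Fin n → ℝ)
    (p p' : Fin n) : Prop :=
  ∃ t, rowSupp A t ∩ supp v = {p} ∧ rowSupp A t ∩ supp v' = {p'}

/-- The joint saturation graph of `v` and `v'` with respect to `A`. -/
def JSG {m n : ℕ} (A : Matrix (Fin m) (Fin n) ℝ) (v v' : Fin n → ℝ) :
    SimpleGraph (Fin n) where
  Adj p p' := p ≠ p' ∧ (jsgEdge A v v' p p' ∨ jsgEdge A v v' p' p)
  symm := ⟨fun p p' h => ⟨h.1.symm, h.2.symm⟩⟩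
  loopless := ⟨fun p h => h.1 rfl⟩

/-- The node set of the joint saturation graph: the symmetric difference of the supports. -/
def jsgNodes {n : ℕ} (v v' : Fin n → ℝ) : Set (Fin n) :=
  (supp v \ supp v') ∪ (supp v' \ supp v)

def JSGConnected {m n : ℕ} (A : Matrix (Fin m) (Fin n) ℝ) (v v' : Fin n → ℝ) : Prop :=
  ∀ p ∈ jsgNodes v v', ∀ q ∈ jsgNodes v v', (JSG A v v').Reachable p q

/-- One of the two partite sets is contained in a single connected component. -/
def JSGPartiteConnected {m n : ℕ} (A : Matrix (Fin m) (Fin n) ℝ) (v v' : Fin n → ℝ) : Prop :=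
  (∀ p ∈ supp v \ supp v', ∀ q ∈ supp v \ supp v', (JSG A v v').Reachable p q) ∨
  (∀ p ∈ supp v' \ supp v, ∀ q ∈ supp v' \ supp v, (JSG A v v').Reachable p q)

/-- Exactly two components, one of which is an isolated node. -/
def JSGAlmostConnected {m n : ℕ} (A : Matrix (Fin m) (Fin n) ℝ) (v v' : Fin n → ℝ) : Prop :=
  ∃ q ∈ jsgNodes v v', (∀ p, ¬ (JSG A v v').Adj q p) ∧ (jsgNodes v v' \ {q}).Nonempty ∧
    ∀ p ∈ jsgNodes v v' \ {q}, ∀ r ∈ jsgNodes v v' \ {q}, (JSG A v v').Reachable p r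

/-- The (directed) circular arc from `i` to `j` in `Fin n`. -/
def arc {n : ℕ} [NeZero n] (i j : Fin n) : Set (Fin n) :=
  {k | ∃ h : ℕ, h ≤ ((j - i : Fin n) : ℕ) ∧ k = i + (Fin.ofNat n h)}

/-- A matrix is row circular if each row support is a circular arc. -/
def RowCircular {m n : ℕ} [NeZero n] (A : Matrix (Fin m) (Fin n) ℝ) : Prop :=
  ∀ t, ∃ i j : Fin n, rowSupp A t = arc i j

/-- The standard assumptions: binary, no dominating rows, between 2 and n-1 ones per row,
no all-zero or all-one column. -/
def StandardAssumptions {m n : ℕ} (A : Matrix (Fin m) (Fin n) ℝ) : Prop :=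
  IsBinaryMatrix A ∧
  (∀ s t : Fin m, s ≠ t → ¬ rowSupp A s ⊆ rowSupp A t) ∧
  (∀ t, 2 ≤ (rowSupp A t).ncard ∧ (rowSupp A t).ncard ≤ n - 1) ∧
  (∀ j : Fin n, (∃ t, A t j ≠ 0) ∧ (∃ t, A t j = 0))

/-- `a` and `b` occur consecutively (in either order) in the list `l`. -/
def ListConsec {α : Type*} (l : List α) (a b : α) : Prop :=
  ∃ k : ℕ, (l[k]? = some a ∧ l[k+1]? = some b) ∨ (l[k]? = some b ∧ l[k+1]? = some a)

/-- `a` and `b` occur cyclically consecutively (in either order) in the list `l`. -/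
def CycConsec {α : Type*} (l : List α) (a b : α) : Prop :=
  ∃ k : ℕ, k < l.length ∧
    ((l[k]? = some a ∧ l[(k+1) % l.length]? = some b) ∨
     (l[k]? = some b ∧ l[(k+1) % l.length]? = some a))

/-- The set `S` induces a path (possibly a single node) in `G`. -/
def IsPathOn {n : ℕ} (G : SimpleGraph (Fin n)) (S : Set (Fin n)) : Prop :=
  ∃ l : List (Fin n), l.Nodup ∧ (∀ x, x ∈ S ↔ x ∈ l) ∧
    (∀ a b, a ∈ S → G.Adj a b → ListConsec l a b) ∧
    (∀ a b, ListConsec l a b → G.Adj a b)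

/-- The set `S` induces a cycle in `G`. -/
def IsCycleOn {n : ℕ} (G : SimpleGraph (Fin n)) (S : Set (Fin n)) : Prop :=
  ∃ l : List (Fin n), 3 ≤ l.length ∧ l.Nodup ∧ (∀ x, x ∈ S ↔ x ∈ l) ∧
    (∀ a b, a ∈ S → G.Adj a b → CycConsec l a b) ∧
    (∀ a b, CycConsec l a b → G.Adj a b)

/-- `p` and `q` are cyclically consecutive elements of `S`. -/
def CyclConsecIn {n : ℕ} [NeZero n] (S : Set (Fin n)) (p q : Fin n) : Prop :=
  p ≠ q ∧ p ∈ S ∧ q ∈ S ∧ (arc p q ∩ S = {p, q} ∨ arc q p ∩ S = {p, q})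

/-- The circulant matrix `C(n,2)` with row supports `{t, t+1}` (mod n). -/
def Cn2 (n : ℕ) [NeZero n] : Matrix (Fin n) (Fin n) ℝ :=
  fun t j => if j = t ∨ j = t + 1 then 1 else 0

/-- Append a row to a matrix. -/
def appendRow {m n : ℕ} (A : Matrix (Fin m) (Fin n) ℝ) (a : Fin n → ℝ) :
    Matrix (Fin (m+1)) (Fin n) ℝ :=
  fun t j => if h : (t : ℕ) < m then A ⟨t, h⟩ j else a j

/-- A set of points is integral if all its extreme points are integer vectors. -/
def IsIntegralSet {n : ℕ} (S : Set (Fin n → ℝ)) : Prop :=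
  ∀ x ∈ S.extremePoints ℝ, ∀ j, ∃ z : ℤ, x j = z

/-- A binary matrix is minimally nonideal if `Q(A)` is not integral but both restrictions
`Q(A) ∩ {x_i = 0}` and `Q(A) ∩ {x_i = 1}` are integral for every coordinate `i`. -/
def MinimallyNonideal {m n : ℕ} (A : Matrix (Fin m) (Fin n) ℝ) : Prop :=
  ¬ IsIntegralSet (polyQ A) ∧
  ∀ i : Fin n, IsIntegralSet (polyQ A ∩ {x | x i = 0}) ∧
               IsIntegralSet (polyQ A ∩ {x | x i = 1})

/-- The matrix of the degenerate projective plane with `t+1` points and lines. -/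
def Jmat (t : ℕ) : Matrix (Fin (t+1)) (Fin (t+1)) ℝ :=
  fun i j => if i = 0 then (if j = 0 then 0 else 1) else (if j = 0 ∨ j = i then 1 else 0)

/-- `A` is isomorphic to some degenerate projective plane matrix `J_t`, `t ≥ 2`. -/
def IsoToDegenProjPlane {m n : ℕ} (A : Matrix (Fin m) (Fin n) ℝ) : Prop :=
  ∃ t : ℕ, 2 ≤ t ∧ ∃ (σ : Fin m ≃ Fin (t+1)) (τ : Fin n ≃ Fin (t+1)),
    ∀ i j, A i j = Jmat t (σ i) (τ j)

/-- `A₁` is the core of `A`: a square nonsingular row submatrix with `r` ones per row and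
per column, all other rows of `A` having more than `r` ones. -/
def IsCore {m n : ℕ} (A : Matrix (Fin m) (Fin n) ℝ) (A₁ : Matrix (Fin n) (Fin n) ℝ)
    (r : ℕ) : Prop :=
  2 ≤ r ∧ A₁.det ≠ 0 ∧
  (∃ f : Fin n → Fin m, Function.Injective f ∧ (∀ i, A₁ i = A (f i)) ∧
    ∀ t, t ∉ Set.range f → r < (rowSupp A t).ncard) ∧
  (∀ i, (rowSupp A₁ i).ncard = r) ∧ (∀ j, {i | A₁ i j ≠ 0}.ncard = r)

/-- `B₁` is the core of the blocker of `A`: a square nonsingular matrix whose rows are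
binary vertices of `Q*(A)` with `s` ones per row and per column, all other binary
vertices of `Q*(A)` having more than `s` ones. -/
def IsBlockerCore {m n : ℕ} (A : Matrix (Fin m) (Fin n) ℝ) (B₁ : Matrix (Fin n) (Fin n) ℝ)
    (s : ℕ) : Prop :=
  2 ≤ s ∧ B₁.det ≠ 0 ∧
  (∀ i, IsBinaryVec (B₁ i) ∧ IsVertex (Qstar A) (B₁ i)) ∧
  Function.Injective (fun i => B₁ i) ∧
  (∀ i, (rowSupp B₁ i).ncard = s) ∧ (∀ j, {i | B₁ i j ≠ 0}.ncard = s) ∧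
  (∀ x, IsBinaryVec x → IsVertex (Qstar A) x → (∀ i, x ≠ B₁ i) → s < (supp x).ncard)

/-- `w^i` for `n = 3ν`: the complement of the characteristic vector of the residue class
`i` mod 3. -/
def wVec (n : ℕ) (i : Fin 3) : Fin n → ℝ :=
  fun k => if (k : ℕ) % 3 = (i : ℕ) then 0 else 1

/-- `a^i` for `n = 3ν`: the characteristic vector of the residue class `i` mod 3
(`a¹ = (1,0,0,1,0,0,…)` corresponds to `i = 0`). -/
def aVec (n : ℕ) (i : ℕ) : Fin n → ℝ :=
  fun k => if (k : ℕ) % 3 = i then 1 else 0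

set_option linter.unusedSectionVars false in
section
namespace StmtAux

variable {n : ℕ} [NeZero n]

def fdist (u w : Fin n) : ℕ := ((w - u : Fin n) : ℕ)

lemma fdist_lt (u w : Fin n) : fdist u w < n := (w - u).is_lt

lemma fdist_self (u : Fin n) : fdist u u = 0 := by simp [fdist]

lemma fdist_eq_zero {u w : Fin n} (h : fdist u w = 0) : u = w := by
  have : w - u = 0 := Fin.ext h
  have := sub_eq_zero.mp this
  exact this.symm

lemma fdist_add (u k w : Fin n) :
    fdist u k + fdist k w = fdist u w ∨ fdist u k + fdist k w = fdist u w + n := by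
  have h : (w - k) + (k - u) = w - u := sub_add_sub_cancel w k u
  have h2 : fdist u w = (fdist u k + fdist k w) % n := by
    unfold fdist
    rw [← h, Fin.add_def, Nat.add_comm]
  have b1 := fdist_lt u k
  have b2 := fdist_lt k w
  rcases Nat.lt_or_ge (fdist u k + fdist k w) n with hlt | hge
  · left; rw [h2, Nat.mod_eq_of_lt hlt]
  · right
    rw [Nat.mod_eq_sub_mod hge, Nat.mod_eq_of_lt (by omega)] at h2
    omega

lemma mem_arc {u w k : Fin n} : k ∈ arc u w ↔ fdist u k ≤ fdist u w := by
  constructor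
  · rintro ⟨h, hh, rfl⟩
    have hlt : h < n := lt_of_le_of_lt hh (fdist_lt u w)
    have : fdist u (u + Fin.ofNat n h) = h := by
      unfold fdist
      rw [add_sub_cancel_left]
      simp [Fin.val_ofNat, Nat.mod_eq_of_lt hlt]
    rw [this]; exact hh
  · intro h
    refine ⟨fdist u k, h, ?_⟩
    have h2 : Fin.ofNat n (fdist u k) = k - u :=
      Fin.ext (by simp [fdist, Fin.val_ofNat, Nat.mod_eq_of_lt (k - u).is_lt])
    rw [h2]; exact (add_sub_cancel u k).symm

lemma self_mem_arc (u w : Fin n) : u ∈ arc u w := by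
  rw [mem_arc, fdist_self]; exact Nat.zero_le _

lemma right_mem_arc (u w : Fin n) : w ∈ arc u w := by rw [mem_arc]

lemma fdist_inj {i p q : Fin n} (h : fdist i p = fdist i q) : p = q :=
  sub_left_inj.mp (Fin.ext h)

lemma arc_subset {i j p q : Fin n} (hpq : fdist i p ≤ fdist i q)
    (hq : fdist i q ≤ fdist i j) : arc p q ⊆ arc i j := by
  intro x hx
  rw [mem_arc] at hx ⊢
  have h1 := fdist_add i p q
  have h2 := fdist_add i p x
  have b1 := fdist_lt i q
  have b2 := fdist_lt p x
  have b3 := fdist_lt i x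
  have b4 := fdist_lt p q
  omega

lemma arc_dichotomy {i j u w : Fin n} (hu : u ∈ arc i j) (hw : w ∈ arc i j) :
    arc u w ⊆ arc i j ∨ arc w u ⊆ arc i j := by
  rw [mem_arc] at hu hw
  rcases le_or_gt (fdist i u) (fdist i w) with h | h
  · exact Or.inl (arc_subset h hw)
  · exact Or.inr (arc_subset h.le hu)



variable {m n : ℕ}

def SInt (A : Matrix (Fin m) (Fin n) ℝ) : Set (Fin n → ℝ) :=
  {x | (∀ j, ∃ k : ℕ, x j = k) ∧ ∀ i, 1 ≤ ∑ j, A i j * x j}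

lemma vertex_mem {A : Matrix (Fin m) (Fin n) ℝ} {v : Fin n → ℝ}
    (hv : IsVertex (Qstar A) v) : v ∈ SInt A :=
  extremePoints_convexHull_subset hv

lemma binA_nonneg {A : Matrix (Fin m) (Fin n) ℝ} (hbin : IsBinaryMatrix A) (i j) :
    0 ≤ A i j := by rcases hbin i j with h | h <;> rw [h] <;> norm_num

lemma v_nonneg {A : Matrix (Fin m) (Fin n) ℝ} {v : Fin n → ℝ}
    (hvS : v ∈ SInt A) (j : Fin n) : 0 ≤ v j := by
  obtain ⟨k, hk⟩ := hvS.1 j; rw [hk]; positivity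

/-- Key exchange: if `v - e_p` is feasible then `v` is not a vertex. -/
lemma not_sub_mem {A : Matrix (Fin m) (Fin n) ℝ} {v : Fin n → ℝ}
    (hbin : IsBinaryMatrix A) (hv : IsVertex (Qstar A) v) (p : Fin n)
    (hfeas : (v - Pi.single p 1) ∈ SInt A) : False := by
  have hvS : v ∈ SInt A := vertex_mem hv
  set e : Fin n → ℝ := Pi.single p 1 with he
  have he_nonneg : ∀ j, 0 ≤ e j := by
    intro j
    rcases eq_or_ne j p with rfl | hne
    · simp [he]
    · simp [he, Pi.single_eq_of_ne hne]
  have hadd : (v + e) ∈ SInt A := by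
    constructor
    · intro j
      rcases eq_or_ne j p with rfl | hne
      · obtain ⟨k, hk⟩ := hvS.1 j
        exact ⟨k + 1, by simp [he, hk]⟩
      · obtain ⟨k, hk⟩ := hvS.1 j
        exact ⟨k, by simp [he, Pi.single_eq_of_ne hne, hk]⟩
    · intro i
      have h1 : ∑ j, A i j * (v + e) j = ∑ j, A i j * v j + ∑ j, A i j * e j := by
        rw [← Finset.sum_add_distrib]; congr 1; funext j; simp [mul_add]
      have h2 : 0 ≤ ∑ j, A i j * e j :=
        Finset.sum_nonneg fun j _ => mul_nonneg (binA_nonneg hbin i j) (he_nonneg j)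
      have := hvS.2 i
      rw [h1]; linarith
  have hseg : v ∈ openSegment ℝ (v - e) (v + e) := by
    refine ⟨1/2, 1/2, by norm_num, by norm_num, by norm_num, ?_⟩
    funext j
    simp [Pi.sub_apply, Pi.add_apply, smul_eq_mul]
    ring
  have hext := (mem_extremePoints.mp hv).2 (v - e) (subset_convexHull ℝ _ hfeas)
    (v + e) (subset_convexHull ℝ _ hadd) hseg
  have := congrFun hext.1 p
  simp [he, Pi.sub_apply] at this

lemma sum_split {A : Matrix (Fin m) (Fin n) ℝ} (i : Fin m) (v : Fin n → ℝ) (p : Fin n) :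
    ∑ j, A i j * v j = A i p * v p + ∑ j ∈ Finset.univ.erase p, A i j * v j :=
  (Finset.add_sum_erase Finset.univ (fun j => A i j * v j) (Finset.mem_univ p)).symm

lemma sum_single {A : Matrix (Fin m) (Fin n) ℝ} (i : Fin m) (p : Fin n) :
    ∑ j, A i j * (Pi.single p 1 : Fin n → ℝ) j = A i p := by
  rw [Finset.sum_eq_single_of_mem p (Finset.mem_univ p)]
  · simp
  · intro b _ hb; simp [Pi.single_eq_of_ne hb]

/-- vertices are binary vectors -/
lemma vertex_binary {A : Matrix (Fin m) (Fin n) ℝ} {v : Fin n → ℝ}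
    (hbin : IsBinaryMatrix A) (hv : IsVertex (Qstar A) v) (j : Fin n) :
    v j = 0 ∨ v j = 1 := by
  have hvS : v ∈ SInt A := vertex_mem hv
  obtain ⟨k, hk⟩ := hvS.1 j
  match k, hk with
  | 0, hk => exact Or.inl (by exact_mod_cast hk)
  | 1, hk => exact Or.inr (by exact_mod_cast hk)
  | (k+2), hk =>
    exfalso
    have hfeas : (v - (Pi.single j 1 : Fin n → ℝ)) ∈ SInt A := by
      constructor
      · intro j'
        rcases eq_or_ne j' j with rfl | hne
        · refine ⟨k + 1, ?_⟩
          simp only [Pi.sub_apply, Pi.single_eq_same, hk]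
          push_cast; ring
        · obtain ⟨k', hk'⟩ := hvS.1 j'
          exact ⟨k', by simp [Pi.sub_apply, Pi.single_eq_of_ne hne, hk']⟩
      · intro i
        have hsum : ∑ j', A i j' * (v - (Pi.single j 1 : Fin n → ℝ)) j' =
            ∑ j', A i j' * v j' - ∑ j', A i j' * (Pi.single j 1 : Fin n → ℝ) j' := by
          rw [← Finset.sum_sub_distrib]; congr 1; funext j'; simp [mul_sub]
        rw [hsum, sum_single]
        rcases hbin i j with h0 | h1'
        · have := hvS.2 i; rw [h0]; linarith
        · have hterm : A i j * v j ≤ ∑ j', A i j' * v j' :=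
            Finset.single_le_sum (f := fun j' => A i j' * v j')
              (fun j' _ => mul_nonneg (binA_nonneg hbin i j') (v_nonneg hvS j'))
              (Finset.mem_univ j)
          rw [h1', hk] at hterm
          rw [h1']
          push_cast at hterm ⊢
          linarith
    exact not_sub_mem hbin hv j hfeas

/-- every row meets the support of a vertex -/
lemma row_meets {A : Matrix (Fin m) (Fin n) ℝ} {v : Fin n → ℝ}
    (hvS : v ∈ SInt A) (i : Fin m) : (rowSupp A i ∩ supp v).Nonempty := by
  by_contra h
  rw [Set.not_nonempty_iff_eq_empty] at h
  have hzero : ∀ j, A i j * v j = 0 := by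
    intro j
    by_contra hj
    have hj1 : A i j ≠ 0 := fun h0 => hj (by rw [h0]; ring)
    have hj2 : v j ≠ 0 := fun h0 => hj (by rw [h0]; ring)
    have hmem : j ∈ rowSupp A i ∩ supp v := ⟨hj1, hj2⟩
    rw [h] at hmem; exact hmem
  have hge := hvS.2 i
  rw [Finset.sum_congr rfl (fun j _ => hzero j)] at hge
  simp at hge
  linarith

/-- minimality: each support element has a private row -/
lemma private_row {A : Matrix (Fin m) (Fin n) ℝ} {v : Fin n → ℝ}
    (hbin : IsBinaryMatrix A) (hv : IsVertex (Qstar A) v) {p : Fin n}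
    (hp : v p ≠ 0) : ∃ s, rowSupp A s ∩ supp v = {p} := by
  have hvS : v ∈ SInt A := vertex_mem hv
  by_contra hno
  push_neg at hno
  have hvp : v p = 1 := (vertex_binary hbin hv p).resolve_left hp
  have hfeas : (v - (Pi.single p 1 : Fin n → ℝ)) ∈ SInt A := by
    constructor
    · intro j'
      rcases eq_or_ne j' p with rfl | hne
      · exact ⟨0, by simp [Pi.sub_apply, hvp]⟩
      · obtain ⟨k', hk'⟩ := hvS.1 j'
        exact ⟨k', by simp [Pi.sub_apply, Pi.single_eq_of_ne hne, hk']⟩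
    · intro i
      have hsum : ∑ j', A i j' * (v - (Pi.single p 1 : Fin n → ℝ)) j' =
          ∑ j', A i j' * v j' - ∑ j', A i j' * (Pi.single p 1 : Fin n → ℝ) j' := by
        rw [← Finset.sum_sub_distrib]; congr 1; funext j'; simp [mul_sub]
      rw [hsum, sum_single]
      rcases hbin i p with h0 | h1'
      · have := hvS.2 i; rw [h0]; linarith
      · have hpmem : p ∈ rowSupp A i ∩ supp v := ⟨by simp [rowSupp, h1'], hp⟩
        have hnsub : ¬ (rowSupp A i ∩ supp v ⊆ {p}) := by
          intro hsub
          exact hno i (subset_antisymm hsub (Set.singleton_subset_iff.mpr hpmem))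
        obtain ⟨q, hq, hqne⟩ := Set.not_subset.mp hnsub
        simp only [Set.mem_singleton_iff] at hqne
        have hq1 : A i q = 1 := (hbin i q).resolve_left hq.1
        have hq2 : v q = 1 := (vertex_binary hbin hv q).resolve_left hq.2
        have hsplit := sum_split (A := A) i v p
        have herase : A i q * v q ≤ ∑ j' ∈ Finset.univ.erase p, A i j' * v j' := by
          apply Finset.single_le_sum (f := fun j' => A i j' * v j')
            (fun j' _ => mul_nonneg (binA_nonneg hbin i j') (v_nonneg hvS j'))
          exact Finset.mem_erase.mpr ⟨hqne, Finset.mem_univ q⟩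
        rw [h1', hvp] at hsplit
        rw [hq1, hq2] at herase
        linarith
  exact not_sub_mem hbin hv p hfeas


lemma key {m n : ℕ} [NeZero n] {A : Matrix (Fin m) (Fin n) ℝ} (hbin : IsBinaryMatrix A)
    (hdom : ∀ s t : Fin m, s ≠ t → ¬ rowSupp A s ⊆ rowSupp A t) (hcirc : RowCircular A)
    {v : Fin n → ℝ} (hv : IsVertex (Qstar A) v) {t : Fin m} {i j : Fin n}
    (hC : rowSupp A t = arc i j) {p1 p2 p3 : Fin n}
    (m1 : p1 ∈ rowSupp A t ∩ supp v) (m2 : p2 ∈ rowSupp A t ∩ supp v)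
    (m3 : p3 ∈ rowSupp A t ∩ supp v)
    (h12 : fdist i p1 < fdist i p2) (h23 : fdist i p2 < fdist i p3) : False := by
  obtain ⟨s, hs⟩ := private_row hbin hv m2.2
  have hp2D : p2 ∈ rowSupp A s := by
    have : p2 ∈ rowSupp A s ∩ supp v := by rw [hs]; rfl
    exact this.1
  have hp1D : p1 ∉ rowSupp A s := by
    intro h
    have : p1 ∈ rowSupp A s ∩ supp v := ⟨h, m1.2⟩
    rw [hs] at this
    rw [this] at h12
    exact lt_irrefl _ h12
  have hp3D : p3 ∉ rowSupp A s := by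
    intro h
    have : p3 ∈ rowSupp A s ∩ supp v := ⟨h, m3.2⟩
    rw [hs] at this
    rw [this] at h23
    exact lt_irrefl _ h23
  have hne : s ≠ t := by
    rintro rfl
    have : p1 ∈ rowSupp A s ∩ supp v := m1
    rw [hs] at this
    rw [this] at h12
    exact lt_irrefl _ h12
  apply hdom s t hne
  obtain ⟨i', j', hD⟩ := hcirc s
  rw [hD] at hp2D hp1D hp3D
  rw [hD, hC]
  intro x hx
  -- offsets along arc i j
  have ha1 : fdist i p1 ≤ fdist i j := mem_arc.mp (hC ▸ m1.1)
  have ha2 : fdist i p2 ≤ fdist i j := mem_arc.mp (hC ▸ m2.1)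
  have ha3 : fdist i p3 ≤ fdist i j := mem_arc.mp (hC ▸ m3.1)
  rw [mem_arc]
  rcases arc_dichotomy hp2D hx with hA | hB
  · -- arc p2 x ⊆ arc i' j'; hence p3 ∉ arc p2 x
    have hp3 : ¬ fdist p2 p3 ≤ fdist p2 x := fun h => hp3D (hA (mem_arc.mpr h))
    have f1 := fdist_add i p2 p3
    have f2 := fdist_add i p2 x
    have b1 := fdist_lt p2 p3
    have b2 := fdist_lt p2 x
    have b3 := fdist_lt i x
    have b4 := fdist_lt i j
    omega
  · -- arc x p2 ⊆ arc i' j'; hence p1 ∉ arc x p2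
    have hp1 : ¬ fdist x p1 ≤ fdist x p2 := fun h => hp1D (hB (mem_arc.mpr h))
    have f1 := fdist_add x p1 p2
    have f2 := fdist_add i p1 x
    have f3 := fdist_add p1 x p2
    have f4 := fdist_add p1 x p1
    have f5 := fdist_add i p1 p2
    have e0 : fdist p1 p1 = 0 := fdist_self p1
    have b1 := fdist_lt p1 x
    have b2 := fdist_lt x p1
    have b3 := fdist_lt x p2
    have b4 := fdist_lt p1 p2
    have b5 := fdist_lt i x
    have b6 := fdist_lt i j
    omega

end StmtAux

end

/-- a row support of a row circular matrix meets the support of any vertex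
of `Q*(A)` in 1 or 2 elements, and if in 2, these are cyclically consecutive in the
support. -/
theorem stmt5 {m n : ℕ} [NeZero n] (A : Matrix (Fin m) (Fin n) ℝ)
    (hstd : StandardAssumptions A) (hcirc : RowCircular A)
    (v : Fin n → ℝ) (hv : IsVertex (Qstar A) v) (t : Fin m) :
    1 ≤ (rowSupp A t ∩ supp v).ncard ∧ (rowSupp A t ∩ supp v).ncard ≤ 2 ∧
      ((rowSupp A t ∩ supp v).ncard = 2 →
        ∃ p q : Fin n, rowSupp A t ∩ supp v = {p, q} ∧ CyclConsecIn (supp v) p q) := by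
  classical
  obtain ⟨hbin, hdom, hsize, hcol⟩ := hstd
  have hvS : v ∈ StmtAux.SInt A := StmtAux.vertex_mem hv
  obtain ⟨i, j, hC⟩ := hcirc t
  have hfin : (rowSupp A t ∩ supp v).Finite := Set.toFinite _
  refine ⟨?_, ?_, ?_⟩
  · exact (Set.ncard_pos hfin).mpr (StmtAux.row_meets hvS t)
  · by_contra hle
    push_neg at hle
    obtain ⟨T, hTsub, hT3⟩ :=
      Set.exists_subset_card_eq (show 3 ≤ (rowSupp A t ∩ supp v).ncard by omega)
    obtain ⟨p1, p2, p3, h12, h13, h23, rfl⟩ := Set.ncard_eq_three.mp hT3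
    have m1 : p1 ∈ rowSupp A t ∩ supp v := hTsub (by simp)
    have m2 : p2 ∈ rowSupp A t ∩ supp v := hTsub (by simp)
    have m3 : p3 ∈ rowSupp A t ∩ supp v := hTsub (by simp)
    have d12 : StmtAux.fdist i p1 ≠ StmtAux.fdist i p2 := fun h => h12 (StmtAux.fdist_inj h)
    have d13 : StmtAux.fdist i p1 ≠ StmtAux.fdist i p3 := fun h => h13 (StmtAux.fdist_inj h)
    have d23 : StmtAux.fdist i p2 ≠ StmtAux.fdist i p3 := fun h => h23 (StmtAux.fdist_inj h)
    have K := fun {pa pb pc : Fin n} (ma : pa ∈ rowSupp A t ∩ supp v)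
      (mb : pb ∈ rowSupp A t ∩ supp v) (mc : pc ∈ rowSupp A t ∩ supp v)
      (hab : StmtAux.fdist i pa < StmtAux.fdist i pb)
      (hbc : StmtAux.fdist i pb < StmtAux.fdist i pc) =>
      StmtAux.key hbin hdom hcirc hv hC ma mb mc hab hbc
    rcases lt_or_gt_of_ne d12 with h1 | h1 <;> rcases lt_or_gt_of_ne d13 with h2 | h2 <;>
      rcases lt_or_gt_of_ne d23 with h3 | h3
    · exact K m1 m2 m3 h1 h3
    · exact K m1 m3 m2 h2 h3
    · omega
    · exact K m3 m1 m2 h2 h1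
    · exact K m2 m1 m3 h1 h2
    · omega
    · exact K m2 m3 m1 h3 h2
    · exact K m3 m2 m1 h3 h1
  · intro h2card
    obtain ⟨p, q, hpq, hset⟩ := Set.ncard_eq_two.mp h2card
    refine ⟨p, q, hset, ?_⟩
    have hp : p ∈ rowSupp A t ∩ supp v := by rw [hset]; exact Or.inl rfl
    have hq : q ∈ rowSupp A t ∩ supp v := by rw [hset]; exact Or.inr rfl
    have hpC : StmtAux.fdist i p ≤ StmtAux.fdist i j := StmtAux.mem_arc.mp (hC ▸ hp.1)
    have hqC : StmtAux.fdist i q ≤ StmtAux.fdist i j := StmtAux.mem_arc.mp (hC ▸ hq.1)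
    rcases le_or_gt (StmtAux.fdist i p) (StmtAux.fdist i q) with hle | hlt
    · refine ⟨hpq, hp.2, hq.2, Or.inl ?_⟩
      apply subset_antisymm
      · intro x hx
        have hxC : x ∈ arc i j := StmtAux.arc_subset hle hqC hx.1
        have : x ∈ rowSupp A t ∩ supp v := ⟨hC ▸ hxC, hx.2⟩
        rw [hset] at this
        exact this
      · rintro x (rfl | rfl)
        · exact ⟨StmtAux.self_mem_arc x q, hp.2⟩
        · exact ⟨StmtAux.right_mem_arc p x, hq.2⟩
    · refine ⟨hpq, hp.2, hq.2, Or.inr ?_⟩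
      apply subset_antisymm
      · intro x hx
        have hxC : x ∈ arc i j := StmtAux.arc_subset hlt.le hpC hx.1
        have : x ∈ rowSupp A t ∩ supp v := ⟨hC ▸ hxC, hx.2⟩
        rw [hset] at this
        exact this
      · rintro x (rfl | rfl)
        · exact ⟨StmtAux.right_mem_arc q x, hp.2⟩
        · exact ⟨StmtAux.self_mem_arc x p, hq.2⟩
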